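/- Every basic feasible solution of the bipartite relaxation of the perfect matching polytope (degree constraints x(δ(u))=1 for all vertices and x ≥ 0) is half-integral: every coordinate lies in {0, 1/2, 1}, and its support is a disjoint union of edges and odd cycles. -/

import Mathlib

open Finset

/-- Feasibility for the bipartite relaxation of the perfect matching polytope:
`x` is nonnegative, supported on edges of `G`, and satisfies `x(δ(u)) = 1` for
every vertex `u`. -/
def BipartiteFeasible {V : Type*} [Fintype V] [DecidableEq V] (G : SimpleGraph V)
    [DecidableRel G.Adj] (x : Sym2 V → ℝ) : Prop :=
  (∀ e, 0 ≤ x e) ∧ (∀ e, e ∉ G.edgeSet → x e = 0) ∧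
    ∀ u : V, ∑ e ∈ G.incidenceFinset u, x e = 1

/-- The subgraph of `G` formed by the edges of value `1/2` in `x`. -/
def HalfGraph {V : Type*} (G : SimpleGraph V) (x : Sym2 V → ℝ) : SimpleGraph V where
  Adj u v := G.Adj u v ∧ x s(u, v) = 1/2
  symm := by
    constructor
    intro u v h
    rw [Sym2.eq_swap] at h; exact ⟨h.1.symm, h.2⟩
  loopless := by constructor; intro u h; exact G.irrefl h.1

open Classical in
lemma keyA {V : Type*} [Fintype V] [DecidableEq V] (G : SimpleGraph V) [DecidableRel G.Adj]
    (x : Sym2 V → ℝ)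
    (hfeas : BipartiteFeasible G x)
    (hextreme : ¬ ∃ y z : Sym2 V → ℝ, BipartiteFeasible G y ∧ BipartiteFeasible G z ∧
      y ≠ z ∧ (∀ e, x e = (y e + z e) / 2))
    (d : Sym2 V → ℝ) (hd1 : ∀ e, e ∉ G.edgeSet → d e = 0) (hd2 : ∀ e, x e = 0 → d e = 0)
    (hd3 : ∀ u : V, ∑ e ∈ G.incidenceFinset u, d e = 0) : d = 0 := by
  obtain ⟨hx0, hxe, hxs⟩ := hfeas
  by_contra hne
  have hex : ∃ e, d e ≠ 0 := by
    by_contra h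
    push_neg at h
    exact hne (funext h)
  set T : Finset (Sym2 V) := univ.filter (fun e => d e ≠ 0) with hT
  have hTne : T.Nonempty := by
    obtain ⟨e, he⟩ := hex
    exact ⟨e, by simp [hT, he]⟩
  obtain ⟨e₀, he₀T, he₀min⟩ := T.exists_min_image (fun e => x e / |d e|) hTne
  set ε := x e₀ / |d e₀| with hε
  have hdT : ∀ e ∈ T, d e ≠ 0 := fun e he => (mem_filter.mp he).2
  have hxT : ∀ e ∈ T, 0 < x e := by
    intro e he
    rcases lt_or_eq_of_le (hx0 e) with h | h
    · exact h
    · exact absurd (hd2 e h.symm) (hdT e he)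
  have hεpos : 0 < ε := div_pos (hxT e₀ he₀T) (abs_pos.mpr (hdT e₀ he₀T))
  have hbound : ∀ e, ε * |d e| ≤ x e := by
    intro e
    by_cases h : d e = 0
    · simp [h, hx0 e]
    · have heT : e ∈ T := by simp [hT, h]
      have := he₀min e heT
      calc ε * |d e| ≤ (x e / |d e|) * |d e| := by
            apply mul_le_mul_of_nonneg_right this (abs_nonneg _)
        _ = x e := div_mul_cancel₀ _ (abs_ne_zero.mpr h)
  have hfeasy : ∀ (s : ℝ), |s| = 1 → BipartiteFeasible G (fun e => x e + s * ε * d e) := by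
    intro s hs
    refine ⟨?_, ?_, ?_⟩
    · intro e
      show 0 ≤ x e + s * ε * d e
      have h1 : s * ε * d e ≥ -(ε * |d e|) := by
        have : |s * ε * d e| = ε * |d e| := by
          rw [abs_mul, abs_mul, hs, abs_of_pos hεpos, one_mul]
        linarith [neg_abs_le (s * ε * d e), this.le, this.ge]
      linarith [hbound e]
    · intro e he
      show x e + s * ε * d e = 0
      rw [hxe e he, hd1 e he]; ring
    · intro u
      show ∑ e ∈ G.incidenceFinset u, (x e + s * ε * d e) = 1
      rw [Finset.sum_add_distrib, hxs u]
      have : ∑ e ∈ G.incidenceFinset u, s * ε * d e = s * ε * ∑ e ∈ G.incidenceFinset u, d e := by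
        rw [Finset.mul_sum]
      rw [this, hd3 u]; ring
  apply hextreme
  refine ⟨fun e => x e + 1 * ε * d e, fun e => x e + (-1) * ε * d e,
    hfeasy 1 (by norm_num), hfeasy (-1) (by norm_num), ?_, fun e => by ring⟩
  intro h
  have := congrFun h e₀
  have : ε * d e₀ = 0 := by linarith
  rcases mul_eq_zero.mp this with h | h
  · exact absurd h hεpos.ne'
  · exact hdT e₀ he₀T h

open Classical in
lemma frac_half {V : Type*} [Fintype V] [DecidableEq V] (G : SimpleGraph V) [DecidableRel G.Adj]
    (x : Sym2 V → ℝ)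
    (hfeas : BipartiteFeasible G x)
    (hextreme : ¬ ∃ y z : Sym2 V → ℝ, BipartiteFeasible G y ∧ BipartiteFeasible G z ∧
      y ≠ z ∧ (∀ e, x e = (y e + z e) / 2)) :
    ∀ e, x e ≠ 0 → x e ≠ 1 → x e = 1/2 := by
  obtain ⟨hx0, hxe, hxs⟩ := hfeas
  set FrF : Finset (Sym2 V) := G.edgeFinset.filter (fun e => x e ≠ 0 ∧ x e ≠ 1) with hFrF
  set VF : Finset V := univ.filter (fun v : V => ∃ e ∈ FrF, v ∈ e) with hVF
  have hinc : ∀ (u : V) (e : Sym2 V), e ∈ G.incidenceFinset u ↔ e ∈ G.edgeFinset ∧ u ∈ e := by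
    intro u e
    rw [SimpleGraph.mem_incidenceFinset, SimpleGraph.mem_edgeFinset]
    exact Iff.rfl
  have hFrFsub : ∀ e ∈ FrF, e ∈ G.edgeFinset := fun e he => (mem_filter.mp he).1
  have hreindex : ∀ (d : Sym2 V → ℝ), (∀ g, g ∉ FrF → d g = 0) → ∀ u : V,
      ∑ g ∈ G.incidenceFinset u, d g = ∑ g ∈ FrF.filter (fun e => u ∈ e), d g := by
    intro d hd u
    rw [← Finset.sum_filter_add_sum_filter_not (G.incidenceFinset u) (fun g => g ∈ FrF) d]
    have hz : ∑ g ∈ (G.incidenceFinset u).filter (fun g => g ∉ FrF), d g = 0 :=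
      Finset.sum_eq_zero (fun g hg => hd g (mem_filter.mp hg).2)
    rw [hz, add_zero]
    apply Finset.sum_congr _ (fun _ _ => rfl)
    ext g
    simp only [mem_filter, hinc u g]
    constructor
    · exact fun h => ⟨h.2, h.1.2⟩
    · exact fun h => ⟨⟨hFrFsub g h.1, h.2⟩, h.1⟩
  have hVFempty : ∀ u : V, u ∉ VF → FrF.filter (fun e => u ∈ e) = ∅ := by
    intro u hu
    apply Finset.filter_eq_empty_iff.mpr
    intro g hg hug
    exact hu (mem_filter.mpr ⟨mem_univ u, ⟨g, hg, hug⟩⟩)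
  have hpair : ∀ (u : V) (e f : Sym2 V), e ∈ G.incidenceFinset u → f ∈ G.incidenceFinset u →
      e ≠ f → x e + x f ≤ 1 := by
    intro u e f he hf hef
    have hsub : {e, f} ⊆ G.incidenceFinset u := by
      intro g hg
      rcases mem_insert.mp hg with h | h
      · exact h ▸ he
      · exact (mem_singleton.mp h) ▸ hf
    have hmono := Finset.sum_le_sum_of_subset_of_nonneg hsub (fun i _ _ => hx0 i)
    rw [Finset.sum_pair hef, hxs u] at hmono
    exact hmono
  -- a 1-edge and a fractional edge cannot share a vertex
  have h1frac : ∀ (u : V) (g e₀ : Sym2 V), g ∈ G.incidenceFinset u → e₀ ∈ FrF → u ∈ e₀ →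
      x g = 1 → False := by
    intro u g e₀ hginc he₀ hue₀ hg1
    have he₀inc : e₀ ∈ G.incidenceFinset u := (hinc u e₀).mpr ⟨hFrFsub e₀ he₀, hue₀⟩
    have hne : g ≠ e₀ := by
      intro h
      exact ((mem_filter.mp he₀).2.2) (h ▸ hg1)
    have := hpair u g e₀ hginc he₀inc hne
    have hxe₀pos : 0 < x e₀ := lt_of_le_of_ne (hx0 e₀) (Ne.symm ((mem_filter.mp he₀).2.1))
    rw [hg1] at this
    linarith
  -- every vertex of VF has at least two incident fractional edges
  have hdeg2 : ∀ u ∈ VF, 1 < ((FrF.filter (fun e => u ∈ e)).card) := by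
    intro u hu
    obtain ⟨e₀, he₀, hue₀⟩ := (mem_filter.mp hu).2
    by_contra hle
    push_neg at hle
    have honly : ∀ g ∈ FrF, u ∈ g → g = e₀ := by
      intro g hg hug
      by_contra hne
      have h2 : 1 < ((FrF.filter (fun e => u ∈ e)).card) :=
        Finset.one_lt_card.mpr ⟨g, mem_filter.mpr ⟨hg, hug⟩, e₀, mem_filter.mpr ⟨he₀, hue₀⟩, hne⟩
      omega
    have he₀inc : e₀ ∈ G.incidenceFinset u := (hinc u e₀).mpr ⟨hFrFsub e₀ he₀, hue₀⟩
    have hrest : ∑ g ∈ (G.incidenceFinset u).erase e₀, x g = 0 := by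
      apply Finset.sum_eq_zero
      intro g hg
      have hginc := Finset.mem_of_mem_erase hg
      have hgne := Finset.ne_of_mem_erase hg
      obtain ⟨hgE, hug⟩ := (hinc u g).mp hginc
      by_contra hxg
      have hg1 : x g = 1 := by
        by_contra hxg1
        exact hgne (honly g (mem_filter.mpr ⟨hgE, hxg, hxg1⟩) hug)
      exact h1frac u g e₀ hginc he₀ hue₀ hg1
    have := Finset.sum_erase_add (G.incidenceFinset u) x he₀inc
    rw [hrest, hxs u, zero_add] at this
    exact (mem_filter.mp he₀).2.2 this
  -- linear independence gives the card bound
  have hcard : FrF.card ≤ VF.card := by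
    have hli : LinearIndependent ℝ
        (fun (e : {e // e ∈ FrF}) => (fun (w : {v // v ∈ VF}) =>
          if (w : V) ∈ (e : Sym2 V) then (1:ℝ) else 0)) := by
      rw [Fintype.linearIndependent_iff]
      intro c hc e
      set d : Sym2 V → ℝ := fun g => if h : g ∈ FrF then c ⟨g, h⟩ else 0 with hd
      have hdz : ∀ g, g ∉ FrF → d g = 0 := by
        intro g hg; simp [hd, hg]
      have hd0 : d = 0 := by
        apply keyA G x ⟨hx0, hxe, hxs⟩ hextreme
        · intro g hg
          exact hdz g (fun h => hg (SimpleGraph.mem_edgeFinset.mp (hFrFsub g h)))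
        · intro g hg
          exact hdz g (fun h => (mem_filter.mp h).2.1 hg)
        · intro u
          rw [hreindex d hdz u]
          by_cases hu : u ∈ VF
          · have := congrFun hc ⟨u, hu⟩
            rw [Finset.sum_apply] at this
            simp only [Pi.smul_apply, smul_eq_mul, Pi.zero_apply] at this
            rw [← this, Finset.sum_filter,
              ← Finset.sum_attach FrF (fun g => if u ∈ g then d g else 0)]
            apply Finset.sum_congr rfl
            intro g _
            by_cases hug : u ∈ (g : Sym2 V) <;> simp [hd, g.2, hug]
          · simp [hVFempty u hu]
      have := congrFun hd0 e
      simpa [hd, e.2] using this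
    have hle := hli.fintype_card_le_finrank
    simpa [Module.finrank_fintype_fun_eq_card, Fintype.card_coe] using hle
  -- endpoints count
  have hend : ∀ e ∈ G.edgeFinset, (univ.filter (fun v : V => v ∈ e)).card = 2 := by
    intro e he
    induction e with
    | _ a b =>
      have hab : a ≠ b := (SimpleGraph.mem_edgeFinset.mp he).ne
      have : univ.filter (fun v : V => v ∈ s(a, b)) = {a, b} := by
        ext v
        simp [Sym2.mem_iff]
      rw [this, Finset.card_pair hab]
  -- handshake
  have hhs : ∑ u ∈ VF, (FrF.filter (fun e => u ∈ e)).card = 2 * FrF.card := by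
    have h1 : ∑ u ∈ (univ : Finset V), (FrF.filter (fun e => u ∈ e)).card = 2 * FrF.card := by
      have hcf : ∀ u : V, (FrF.filter (fun e => u ∈ e)).card = ∑ e ∈ FrF, if u ∈ e then 1 else 0 :=
        fun u => Finset.card_filter _ _
      simp_rw [hcf]
      rw [Finset.sum_comm]
      have h2 : ∀ e ∈ FrF, ∑ u ∈ (univ : Finset V), (if u ∈ e then 1 else 0) = 2 := by
        intro e he
        rw [← Finset.card_filter]
        exact hend e (hFrFsub e he)
      rw [Finset.sum_congr rfl h2]
      simp [mul_comm]
    rw [← h1]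
    apply Finset.sum_subset (subset_univ VF)
    intro u _ hu
    simp [hVFempty u hu]
  -- degrees are exactly two
  have hdegeq : ∀ u ∈ VF, (FrF.filter (fun e => u ∈ e)).card = 2 := by
    by_contra hcon
    push_neg at hcon
    obtain ⟨u₀, hu₀, hne⟩ := hcon
    have hlt : ∑ u ∈ VF, 2 < ∑ u ∈ VF, (FrF.filter (fun e => u ∈ e)).card := by
      apply Finset.sum_lt_sum
      · intro i hi
        exact hdeg2 i hi
      · exact ⟨u₀, hu₀, lt_of_le_of_ne (hdeg2 u₀ hu₀) (Ne.symm hne)⟩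
    rw [Finset.sum_const, smul_eq_mul, hhs] at hlt
    omega
  -- final circulation
  set d : Sym2 V → ℝ := fun g => if g ∈ FrF then x g - 1/2 else 0 with hd
  have hdz : ∀ g, g ∉ FrF → d g = 0 := by
    intro g hg; simp [hd, hg]
  have hd0 : d = 0 := by
    apply keyA G x ⟨hx0, hxe, hxs⟩ hextreme
    · intro g hg
      exact hdz g (fun h => hg (SimpleGraph.mem_edgeFinset.mp (hFrFsub g h)))
    · intro g hg
      exact hdz g (fun h => (mem_filter.mp h).2.1 hg)
    · intro u
      rw [hreindex d hdz u]
      by_cases hu : u ∈ VF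
      · -- sum of x over incident fractional edges is 1
        have hz2 : ∑ g ∈ (G.incidenceFinset u).filter (fun g => g ∉ FrF), x g = 0 := by
          apply Finset.sum_eq_zero
          intro g hg
          obtain ⟨hginc, hgnF⟩ := mem_filter.mp hg
          obtain ⟨hgE, hug⟩ := (hinc u g).mp hginc
          by_contra hxg
          have hg1 : x g = 1 := by
            by_contra hxg1
            exact hgnF (mem_filter.mpr ⟨hgE, hxg, hxg1⟩)
          obtain ⟨e₀, he₀, hue₀⟩ := (mem_filter.mp hu).2
          exact h1frac u g e₀ hginc he₀ hue₀ hg1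
        have hsplit := Finset.sum_filter_add_sum_filter_not (G.incidenceFinset u)
          (fun g => g ∈ FrF) x
        rw [hz2, add_zero, hxs u] at hsplit
        have hfilt : (G.incidenceFinset u).filter (fun g => g ∈ FrF)
            = FrF.filter (fun e => u ∈ e) := by
          ext g
          simp only [mem_filter, hinc u g]
          constructor
          · exact fun h => ⟨h.2, h.1.2⟩
          · exact fun h => ⟨⟨hFrFsub g h.1, h.2⟩, h.1⟩
        rw [hfilt] at hsplit
        have hsum : ∑ g ∈ FrF.filter (fun e => u ∈ e), d g
            = (∑ g ∈ FrF.filter (fun e => u ∈ e), x g)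
              - ((FrF.filter (fun e => u ∈ e)).card : ℝ) * (1/2 : ℝ) := by
          have : ∀ g ∈ FrF.filter (fun e => u ∈ e), d g = x g - 1/2 := by
            intro g hg
            simp [hd, (mem_filter.mp hg).1]
          rw [Finset.sum_congr rfl this, Finset.sum_sub_distrib, Finset.sum_const,
            nsmul_eq_mul]
        rw [hsum, hsplit, hdegeq u hu]
        norm_num
      · simp [hVFempty u hu]
  intro e hxe0 hxe1
  have heF : e ∈ FrF := by
    refine mem_filter.mpr ⟨?_, hxe0, hxe1⟩
    rw [SimpleGraph.mem_edgeFinset]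
    by_contra h
    exact hxe0 (hxe e h)
  have := congrFun hd0 e
  simp only [hd, if_pos heF, Pi.zero_apply] at this
  linarith

lemma pair_le {V : Type*} [Fintype V] [DecidableEq V] (G : SimpleGraph V) [DecidableRel G.Adj]
    (x : Sym2 V → ℝ) (hfeas : BipartiteFeasible G x) (u : V) (e f : Sym2 V)
    (he : e ∈ G.incidenceFinset u) (hf : f ∈ G.incidenceFinset u) (hef : e ≠ f) :
    x e + x f ≤ 1 := by
  obtain ⟨hx0, hxe, hxs⟩ := hfeas
  have hsub : {e, f} ⊆ G.incidenceFinset u := by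
    intro g hg
    rcases mem_insert.mp hg with h | h
    · exact h ▸ he
    · exact (mem_singleton.mp h) ▸ hf
  have hmono := Finset.sum_le_sum_of_subset_of_nonneg hsub (fun i _ _ => hx0 i)
  rw [Finset.sum_pair hef, hxs u] at hmono
  exact hmono

open Classical in
/-- At each vertex: either there is a 1-edge and no half-edge, or no 1-edge and
exactly two half-edges. -/
lemma vertex_struct {V : Type*} [Fintype V] [DecidableEq V] (G : SimpleGraph V)
    [DecidableRel G.Adj] (x : Sym2 V → ℝ) (hfeas : BipartiteFeasible G x)
    (hhalf : ∀ e, x e = 0 ∨ x e = 1/2 ∨ x e = 1) (u : V) :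
    ((∃ e ∈ G.incidenceFinset u, x e = 1) ∧
      ((G.incidenceFinset u).filter (fun e => x e = 1/2)).card = 0) ∨
    ((¬ ∃ e ∈ G.incidenceFinset u, x e = 1) ∧
      ((G.incidenceFinset u).filter (fun e => x e = 1/2)).card = 2) := by
  obtain ⟨hx0, hxe, hxs⟩ := hfeas
  by_cases h1 : ∃ e ∈ G.incidenceFinset u, x e = 1
  · left
    refine ⟨h1, ?_⟩
    obtain ⟨e₁, he₁, hxe₁⟩ := h1
    rw [Finset.card_eq_zero]
    apply Finset.filter_eq_empty_iff.mpr
    intro g hg hxg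
    have hne : g ≠ e₁ := fun h => by rw [h, hxe₁] at hxg; norm_num at hxg
    have := pair_le G x ⟨hx0, hxe, hxs⟩ u g e₁ hg he₁ hne
    rw [hxg, hxe₁] at this
    norm_num at this
  · right
    refine ⟨h1, ?_⟩
    push_neg at h1
    have hsplit := Finset.sum_filter_add_sum_filter_not (G.incidenceFinset u)
      (fun e => x e = 1/2) x
    have hz : ∑ g ∈ (G.incidenceFinset u).filter (fun e => ¬ x e = 1/2), x g = 0 := by
      apply Finset.sum_eq_zero
      intro g hg
      obtain ⟨hginc, hgn⟩ := mem_filter.mp hg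
      rcases hhalf g with h | h | h
      · exact h
      · exact absurd h hgn
      · exact absurd h (h1 g hginc)
    have hhalfsum : ∑ g ∈ (G.incidenceFinset u).filter (fun e => x e = 1/2), x g
        = ((G.incidenceFinset u).filter (fun e => x e = 1/2)).card * (1/2 : ℝ) := by
      rw [Finset.sum_congr rfl (fun g hg => (mem_filter.mp hg).2), Finset.sum_const,
        nsmul_eq_mul]
    rw [hz, add_zero, hxs u, hhalfsum] at hsplit
    have : (((G.incidenceFinset u).filter (fun e => x e = 1/2)).card : ℝ) = 2 := by
      linarith
    exact_mod_cast this

open Classical in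
lemma nbr_card {V : Type*} [Fintype V] [DecidableEq V] (G : SimpleGraph V)
    [DecidableRel G.Adj] (x : Sym2 V → ℝ) (u : V) :
    ((HalfGraph G x).neighborSet u).ncard
      = ((G.incidenceFinset u).filter (fun e => x e = 1/2)).card := by
  classical
  have h1 : (HalfGraph G x).neighborSet u
      = ↑(univ.filter (fun w => (HalfGraph G x).Adj u w)) := by
    ext w; simp [SimpleGraph.neighborSet]
  rw [h1, Set.ncard_coe_finset]
  apply Finset.card_bij (fun w _ => s(u, w))
  · intro w hw
    obtain ⟨hadj, hx⟩ : G.Adj u w ∧ x s(u, w) = 1/2 := (mem_filter.mp hw).2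
    refine mem_filter.mpr ⟨?_, hx⟩
    rw [SimpleGraph.mem_incidenceFinset]
    exact ⟨hadj, Sym2.mem_mk_left u w⟩
  · intro w hw w' hw' heq
    rcases Sym2.eq_iff.mp heq with ⟨_, h⟩ | ⟨h, h'⟩
    · exact h
    · exact h'.trans h
  · intro e he
    obtain ⟨heinc, hxe⟩ := mem_filter.mp he
    rw [SimpleGraph.mem_incidenceFinset] at heinc
    obtain ⟨heE, hue⟩ := heinc
    obtain ⟨w, rfl⟩ := Sym2.mem_iff_exists.mp hue
    have hadj : G.Adj u w := heE
    exact ⟨w, mem_filter.mpr ⟨mem_univ w, hadj, hxe⟩, rfl⟩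

open Classical in
/-- Main structure lemma for odd components. -/
lemma odd_comp {V : Type*} [Fintype V] [DecidableEq V] (G : SimpleGraph V) [DecidableRel G.Adj]
    (x : Sym2 V → ℝ)
    (hfeas : BipartiteFeasible G x)
    (hextreme : ¬ ∃ y z : Sym2 V → ℝ, BipartiteFeasible G y ∧ BipartiteFeasible G z ∧
      y ≠ z ∧ (∀ e, x e = (y e + z e) / 2))
    (H : SimpleGraph V) (hHsub : ∀ z w : V, H.Adj z w → G.Adj z w ∧ x s(z, w) = 1/2)
    (hH2 : ∀ z w : V, H.Adj z w →
      (univ.filter (fun y => H.Adj z y)).card = 2)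
    (c : H.ConnectedComponent)
    (u : V) (hu : u ∈ c.supp) (a : V) (hua : H.Adj u a) :
    Odd c.supp.ncard := by
  -- two-neighbour structure
  have Htwo : ∀ z w : V, H.Adj z w → ∃ p q : V, p ≠ q ∧ ∀ y, H.Adj z y ↔ (y = p ∨ y = q) := by
    intro z w hzw
    obtain ⟨p, q, hpq, hset⟩ := Finset.card_eq_two.mp (hH2 z w hzw)
    refine ⟨p, q, hpq, fun y => ?_⟩
    constructor
    · intro hy
      have : y ∈ univ.filter (fun y => H.Adj z y) := mem_filter.mpr ⟨mem_univ y, hy⟩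
      rw [hset] at this
      simpa using this
    · intro hy
      have : y ∈ ({p, q} : Finset V) := by simpa using hy
      rw [← hset] at this
      exact (mem_filter.mp this).2
  -- the "other neighbour" function
  set other : V → V → V := fun z w =>
    if h : ∃ y, H.Adj z y ∧ y ≠ w ∧ ∀ y', H.Adj z y' → y' ≠ w → y' = y then h.choose else z
    with hother_def
  have hother : ∀ z w : V, H.Adj z w →
      H.Adj z (other z w) ∧ other z w ≠ w ∧ ∀ y, H.Adj z y → y ≠ w → y = other z w := by
    intro z w hzw
    obtain ⟨p, q, hpq, hiff⟩ := Htwo z w hzw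
    have hw : w = p ∨ w = q := (hiff w).mp hzw
    have hP : ∃ y, H.Adj z y ∧ y ≠ w ∧ ∀ y', H.Adj z y' → y' ≠ w → y' = y := by
      rcases hw with rfl | rfl
      · refine ⟨q, (hiff q).mpr (Or.inr rfl), Ne.symm hpq, fun y' hy' hne => ?_⟩
        rcases (hiff y').mp hy' with h | h
        · exact absurd h hne
        · exact h
      · refine ⟨p, (hiff p).mpr (Or.inl rfl), hpq, fun y' hy' hne => ?_⟩
        rcases (hiff y').mp hy' with h | h
        · exact h
        · exact absurd h hne
    have : other z w = hP.choose := by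
      simp only [hother_def]
      rw [dif_pos hP]
    rw [this]
    exact ⟨hP.choose_spec.1, hP.choose_spec.2.1, fun y hy hne => hP.choose_spec.2.2 y hy hne⟩
  have hinvol : ∀ z w : V, H.Adj z w → other z (other z w) = w := by
    intro z w hzw
    obtain ⟨hadj', hne', _⟩ := hother z w hzw
    obtain ⟨_, _, huniq⟩ := hother z (other z w) hadj'
    exact (huniq w hzw (Ne.symm hne')).symm
  -- the canonical walk
  set vp : ℕ → V × V := fun n => Nat.rec (u, a) (fun _ p => (p.2, other p.2 p.1)) n with hvp
  set v : ℕ → V := fun n => (vp n).1 with hv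
  have hv0 : v 0 = u := rfl
  have hv1 : v 1 = a := rfl
  have hrec : ∀ n, v (n + 2) = other (v (n + 1)) (v n) := fun n => rfl
  have hadj : ∀ n, H.Adj (v n) (v (n + 1)) := by
    intro n
    induction n with
    | zero => exact hua
    | succ m ih =>
      rw [hrec m]
      exact (hother (v (m + 1)) (v m) ih.symm).1
  have hsupp : ∀ n, v n ∈ c.supp := by
    intro n
    induction n with
    | zero => exact hu
    | succ m ih =>
      rw [SimpleGraph.ConnectedComponent.mem_supp_iff] at ih ⊢
      rw [← ih]
      exact SimpleGraph.ConnectedComponent.sound (hadj m).symm.reachable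
  have hback : ∀ n, other (v (n + 1)) (v (n + 2)) = v n := by
    intro n
    rw [hrec n]
    exact hinvol (v (n + 1)) (v n) (hadj n).symm
  set g : ℕ → V × V := fun n => (v n, v (n + 1)) with hg
  have hgback : ∀ m n, g (m + 1) = g (n + 1) → g m = g n := by
    intro m n h
    have h1 : v (m + 1) = v (n + 1) := congrArg Prod.fst h
    have h2 : v (m + 2) = v (n + 2) := congrArg Prod.snd h
    have : v m = v n := by
      rw [← hback m, ← hback n, h1, h2]
    exact Prod.ext this h1
  have hgstep : ∀ m n, g m = g n → g (m + 1) = g (n + 1) := by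
    intro m n h
    have h1 : v m = v n := congrArg Prod.fst h
    have h2 : v (m + 1) = v (n + 1) := congrArg Prod.snd h
    refine Prod.ext h2 ?_
    show v (m + 2) = v (n + 2)
    rw [hrec m, hrec n, h1, h2]
  have hdown : ∀ t i, g i = g (i + t) → g 0 = g t := by
    intro t i
    induction i with
    | zero => exact fun h => by simpa using h
    | succ n ih =>
      intro h
      apply ih
      apply hgback
      have e : n + 1 + t = n + t + 1 := by omega
      rw [← e]
      exact h
  have hup : ∀ t, g 0 = g t → ∀ n, g n = g (n + t) := by
    intro t h n
    induction n with
    | zero => simpa using h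
    | succ m ih =>
      have e : m + t + 1 = m + 1 + t := by omega
      rw [← e]
      exact hgstep m (m + t) ih
  -- existence of a period
  have hper_ex : ∃ q, 0 < q ∧ ∀ n, g n = g (n + q) := by
    obtain ⟨i, j, hij, hgij⟩ := Finite.exists_ne_map_eq_of_infinite g
    rcases Nat.lt_or_ge i j with hlt | hge
    · refine ⟨j - i, by omega, hup (j - i) (hdown (j - i) i ?_)⟩
      have e : i + (j - i) = j := by omega
      rw [e]
      exact hgij
    · have hlt : j < i := by omega
      refine ⟨i - j, by omega, hup (i - j) (hdown (i - j) j ?_)⟩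
      have e : j + (i - j) = i := by omega
      rw [e]
      exact hgij.symm
  set p : ℕ := Nat.find hper_ex with hpdef
  obtain ⟨hppos, hper⟩ := Nat.find_spec hper_ex
  have hvper : ∀ n, v (n + p) = v n := fun n => (congrArg Prod.fst (hper n)).symm
  have hmin : ∀ q, 0 < q → (∀ n, g n = g (n + q)) → p ≤ q := by
    intro q hq hqper
    exact Nat.find_min' hper_ex ⟨hq, hqper⟩
  have hp3 : 3 ≤ p := by
    rcases Nat.lt_or_ge p 3 with h | h
    · exfalso
      interval_cases p
      · omega
      · exact (H.ne_of_adj (hadj 0)) (by simpa using (hvper 0).symm)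
      · have h2 : v 2 = v 0 := by simpa using hvper 0
        have hne := (hother (v 1) (v 0) (hadj 0).symm).2.1
        have h02 : v 2 = other (v 1) (v 0) := hrec 0
        rw [← h02] at hne
        exact hne h2
    · exact h
  -- injectivity of v on [0, p)
  have hinj : ∀ i, i < p → ∀ j, j < p → v i = v j → i = j := by
    have aux : ∀ i j, i < j → j < p → v i = v j → False := by
      intro i j hij hjp hvij
      by_cases hA : v (i + 1) = v (j + 1)
      · have hgij : g i = g j := Prod.ext hvij hA
        have : p ≤ j - i := by
          apply hmin (j - i) (by omega)
          apply hup
          apply hdown (j - i) i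
          rw [hgij]; congr 1; omega
        omega
      · -- reflection argument
        set J := j + p with hJ
        have hj1 : 1 ≤ j := by omega
        have hbase0 : v (i + 0) = v (J - 0) := by
          simpa [hJ] using (hvij.trans (hvper j).symm)
        have hbase1 : v (i + 1) = v (J - 1) := by
          have huniq := (hother (v j) (v (j + 1)) (hadj j)).2.2
          have hadjzj : H.Adj (v j) (v (i + 1)) := by
            rw [← hvij]; exact hadj i
          have h1 : v (i + 1) = other (v j) (v (j + 1)) := huniq (v (i + 1)) hadjzj hA
          have h2 : other (v j) (v (j + 1)) = v (j - 1) := by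
            have := hback (j - 1)
            have e1 : j - 1 + 1 = j := by omega
            have e2 : j - 1 + 2 = j + 1 := by omega
            rw [e1, e2] at this
            exact this
          have h3 : v (J - 1) = v (j - 1) := by
            have : J - 1 = (j - 1) + p := by omega
            rw [this, hvper]
          rw [h1, h2, h3]
        have hstep : ∀ k, k + 2 ≤ J - i → v (i + k) = v (J - k) →
            v (i + k + 1) = v (J - k - 1) → v (i + k + 2) = v (J - k - 2) := by
          intro k hk h0 h1
          have hJk2 : 2 ≤ J - k := by omega
          have := hback (J - k - 2)
          have e1 : J - k - 2 + 1 = J - k - 1 := by omega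
          have e2 : J - k - 2 + 2 = J - k := by omega
          rw [e1, e2] at this
          calc v (i + k + 2) = other (v (i + k + 1)) (v (i + k)) := hrec (i + k)
            _ = other (v (J - k - 1)) (v (J - k)) := by rw [h0, h1]
            _ = v (J - k - 2) := this
        have hrefl : ∀ k, k ≤ J - i → v (i + k) = v (J - k) := by
          intro k
          induction k using Nat.strong_induction_on with
          | _ k ih =>
            match k with
            | 0 => exact fun _ => hbase0
            | 1 => exact fun _ => hbase1
            | (k + 2) =>
              intro hk
              have h0 := ih k (by omega) (by omega)
              have h1 := ih (k + 1) (by omega) (by omega)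
              exact hstep k hk h0 h1
        have ht4 : 4 ≤ J - i := by omega
        rcases Nat.even_or_odd (J - i) with ⟨m, hm⟩ | ⟨m, hm⟩
        · -- even: backtracking contradiction
          have hm2 : 2 ≤ m := by omega
          have h1 := hrefl (m - 1) (by omega)
          have e1 : J - (m - 1) = i + (m - 1) + 2 := by omega
          rw [e1] at h1
          have := (hother (v (i + (m - 1) + 1)) (v (i + (m - 1))) (hadj (i + (m - 1))).symm).2.1
          rw [← hrec (i + (m - 1))] at this
          exact this h1.symm
        · -- odd: adjacent equal contradiction
          have h1 := hrefl m (by omega)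
          have e1 : J - m = i + m + 1 := by omega
          rw [e1] at h1
          exact (H.ne_of_adj (hadj (i + m))) h1
    intro i hi j hj hvij
    rcases Nat.lt_trichotomy i j with h | h | h
    · exact absurd (aux i j h hj hvij) not_false
    · exact h
    · exact absurd (aux j i h hi hvij.symm) not_false
  -- the support is the image of the walk
  have hvmod : ∀ n, v n = v (n % p) := by
    have hadd : ∀ k m, v (m + p * k) = v m := by
      intro k
      induction k with
      | zero => intro m; simp
      | succ l ih =>
        intro m
        have : m + p * (l + 1) = (m + p * l) + p := by ring
        rw [this, hvper, ih]
    intro n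
    conv_lhs => rw [← Nat.mod_add_div n p]
    exact hadd (n / p) (n % p)
  set S : Finset V := (range p).image v with hS
  have hSmem : ∀ n, v n ∈ S := by
    intro n
    rw [hvmod n]
    exact Finset.mem_image_of_mem v (mem_range.mpr (Nat.mod_lt n hppos))
  have hcardS : S.card = p := by
    rw [hS, Finset.card_image_of_injOn, Finset.card_range]
    intro i hi j hj hvij
    exact hinj i (mem_range.mp (by simpa using hi)) j (mem_range.mp (by simpa using hj)) hvij
  have hprev : ∀ m, other (v m) (v (m + 1)) = v (m + p - 1) := by
    intro m
    have := hback (m + p - 1)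
    have e1 : m + p - 1 + 1 = m + p := by omega
    have e2 : m + p - 1 + 2 = m + p + 1 := by omega
    rw [e1, e2] at this
    have e3 : v (m + p) = v m := hvper m
    have e4 : v (m + p + 1) = v (m + 1) := by
      have : m + p + 1 = (m + 1) + p := by omega
      rw [this, hvper]
    rw [e3, e4] at this
    exact this
  have hclosed : ∀ z ∈ S, ∀ y, H.Adj z y → y ∈ S := by
    intro z hz y hzy
    obtain ⟨m, hm, rfl⟩ := Finset.mem_image.mp hz
    by_cases hy : y = v (m + 1)
    · rw [hy]; exact hSmem (m + 1)
    · have := (hother (v m) (v (m + 1)) (hadj m)).2.2 y hzy hy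
      rw [this, hprev m]
      exact hSmem (m + p - 1)
  have hsupS : c.supp = ↑S := by
    apply Set.eq_of_subset_of_subset
    · intro w hw
      have hcu : H.connectedComponentMk u = c := hu
      have hreach : H.Reachable u w := by
        rw [SimpleGraph.ConnectedComponent.mem_supp_iff] at hw
        exact SimpleGraph.ConnectedComponent.exact (by rw [hcu, hw])
      obtain ⟨wk⟩ := hreach
      have hwalk : ∀ (s b : V), H.Walk s b → s ∈ S → b ∈ S := by
        intro s b q
        induction q with
        | nil => exact id
        | cons h q ih => exact fun hs => ih (hclosed _ hs _ h)
      exact hwalk u w wk (hv0 ▸ hSmem 0)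
    · intro w hw
      obtain ⟨m, _, rfl⟩ := Finset.mem_image.mp hw
      exact hsupp m
    -- final parity argument
  rw [hsupS, Set.ncard_coe_finset, hcardS]
  by_contra hodd
  rw [Nat.not_odd_iff_even] at hodd
  set d : Sym2 V → ℝ :=
    fun e => ∑ i ∈ range p, (if s(v i, v (i + 1)) = e then ((-1 : ℝ)) ^ i else 0) with hd
  have hedge : ∀ i : ℕ, s(v i, v (i + 1)) ∈ G.edgeSet ∧ x s(v i, v (i + 1)) = 1/2 := by
    intro i
    obtain ⟨hA, hx⟩ := hHsub _ _ (hadj i)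
    exact ⟨hA, hx⟩
  have hmem : ∀ (i : ℕ) (w : V),
      s(v i, v (i + 1)) ∈ G.incidenceFinset w ↔ (w = v i ∨ w = v (i + 1)) := by
    intro i w
    rw [SimpleGraph.mem_incidenceFinset]
    constructor
    · intro h
      exact Sym2.mem_iff.mp h.2
    · intro h
      exact ⟨(hedge i).1, Sym2.mem_iff.mpr h⟩
  have hd0 : d = 0 := by
    apply keyA G x hfeas hextreme
    · intro e he
      apply Finset.sum_eq_zero
      intro i _
      rw [if_neg]
      intro h
      exact he (h ▸ (hedge i).1)
    · intro e he
      apply Finset.sum_eq_zero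
      intro i _
      rw [if_neg]
      intro h
      rw [← h, (hedge i).2] at he
      norm_num at he
    · intro w
      have hswap : ∑ e ∈ G.incidenceFinset w, d e
          = ∑ i ∈ range p, (if s(v i, v (i + 1)) ∈ G.incidenceFinset w
              then ((-1 : ℝ)) ^ i else 0) := by
        simp only [hd]
        rw [Finset.sum_comm]
        apply Finset.sum_congr rfl
        intro i _
        exact Finset.sum_ite_eq (G.incidenceFinset w) (s(v i, v (i + 1))) (fun _ => ((-1 : ℝ)) ^ i)
      rw [hswap]
      by_cases hwS : w ∈ S
      · obtain ⟨j, hjm, rfl⟩ := Finset.mem_image.mp hwS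
        have hjp : j < p := mem_range.mp hjm
        have hcond : ∀ i : ℕ, (s(v i, v (i + 1)) ∈ G.incidenceFinset (v j))
            ↔ (v j = v i ∨ v j = v (i + 1)) := fun i => hmem i (v j)
        simp only [hcond]
        rw [← Finset.sum_filter]
        by_cases hj0 : j = 0
        · subst hj0
          have hfilteq : (range p).filter (fun i => v 0 = v i ∨ v 0 = v (i + 1))
              = {0, p - 1} := by
            ext i
            simp only [mem_filter, mem_range, mem_insert, mem_singleton]
            constructor
            · rintro ⟨hip, h | h⟩
              · left
                exact hinj i hip 0 (by omega) h.symm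
              · right
                rcases Nat.lt_or_ge (i + 1) p with hlt | hge
                · have h1 : i + 1 = 0 := hinj (i + 1) hlt 0 (by omega) h.symm
                  omega
                · omega
            · intro h
              rcases h with rfl | rfl
              · exact ⟨by omega, Or.inl rfl⟩
              · refine ⟨by omega, Or.inr ?_⟩
                have e1 : p - 1 + 1 = p := by omega
                rw [e1]
                simpa using (hvper 0).symm
          rw [hfilteq, Finset.sum_pair (by omega : (0 : ℕ) ≠ p - 1)]
          have hoddp1 : Odd (p - 1) := by
            rcases hodd with ⟨m, hm⟩
            exact ⟨m - 1, by omega⟩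
          rw [pow_zero, Odd.neg_one_pow hoddp1]
          ring
        · have hfilteq : (range p).filter (fun i => v j = v i ∨ v j = v (i + 1))
              = {j, j - 1} := by
            ext i
            simp only [mem_filter, mem_range, mem_insert, mem_singleton]
            constructor
            · rintro ⟨hip, h | h⟩
              · left
                exact hinj i hip j hjp h.symm
              · right
                rcases Nat.lt_or_ge (i + 1) p with hlt | hge
                · have h1 : i + 1 = j := hinj (i + 1) hlt j hjp h.symm
                  omega
                · exfalso
                  have hip1 : i + 1 = p := by omega
                  have hv0p : v (i + 1) = v 0 := by
                    rw [hip1]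
                    simpa using hvper 0
                  exact hj0 (hinj j hjp 0 (by omega) (h.trans hv0p))
            · intro h
              rcases h with rfl | rfl
              · exact ⟨hjp, Or.inl rfl⟩
              · refine ⟨by omega, Or.inr ?_⟩
                have e1 : j - 1 + 1 = j := by omega
                rw [e1]
          rw [hfilteq, Finset.sum_pair (by omega : j ≠ j - 1)]
          rcases Nat.even_or_odd j with hje | hjo
          · have h1 : Odd (j - 1) := by
              rcases hje with ⟨m, hm⟩
              exact ⟨m - 1, by omega⟩
            rw [Even.neg_one_pow hje, Odd.neg_one_pow h1]
            ring
          · have h1 : Even (j - 1) := by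
              rcases hjo with ⟨m, hm⟩
              exact ⟨m, by omega⟩
            rw [Odd.neg_one_pow hjo, Even.neg_one_pow h1]
            ring
      · apply Finset.sum_eq_zero
        intro i _
        rw [if_neg]
        intro h
        rcases (hmem i w).mp h with rfl | rfl
        · exact hwS (hSmem i)
        · exact hwS (hSmem (i + 1))
  have hfin := congrFun hd0 (s(v 0, v 1))
  simp only [hd, Pi.zero_apply] at hfin
  have hone : ∑ i ∈ range p, (if s(v i, v (i + 1)) = s(v 0, v 1) then ((-1 : ℝ)) ^ i else 0)
      = 1 := by
    rw [← Finset.sum_filter]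
    have : (range p).filter (fun i => s(v i, v (i + 1)) = s(v 0, v 1)) = {0} := by
      ext i
      simp only [mem_filter, mem_range, mem_singleton]
      constructor
      · rintro ⟨hip, heq⟩
        rcases Sym2.eq_iff.mp heq with ⟨h1, _⟩ | ⟨h1, h2⟩
        · exact hinj i hip 0 (by omega) h1
        · exfalso
          have hi1 : i = 1 := hinj i hip 1 (by omega) h1
          subst hi1
          have : (2 : ℕ) = 0 := hinj 2 (by omega) 0 (by omega) h2
          omega
      · rintro rfl
        exact ⟨by omega, rfl⟩
    rw [this]
    simp
  rw [hone] at hfin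
  norm_num at hfin


open Classical in
/-- every basic feasible solution (extreme point) of the bipartite
relaxation is half-integral: each coordinate lies in {0, 1/2, 1}, and the support is
a disjoint union of edges and odd cycles.  The latter is expressed as: every vertex
is incident to at most one edge of value 1; a vertex incident to a 1-edge meets no
half-edge; in the graph of half-edges every vertex has degree 0 or 2; and every
connected component of the half-edge graph containing an edge has an odd number of
vertices (an odd cycle). -/
theorem basic_feasible_solution_proper_half_integral
    {V : Type*} [Fintype V] [DecidableEq V] (G : SimpleGraph V) [DecidableRel G.Adj]
    (x : Sym2 V → ℝ)
    (hfeas : BipartiteFeasible G x)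
    (hextreme : ¬ ∃ y z : Sym2 V → ℝ, BipartiteFeasible G y ∧ BipartiteFeasible G z ∧
      y ≠ z ∧ (∀ e, x e = (y e + z e) / 2)) :
    (∀ e, x e = 0 ∨ x e = 1/2 ∨ x e = 1) ∧
    (∀ u : V, ((G.incidenceFinset u).filter (fun e => x e = 1)).card ≤ 1) ∧
    (∀ u : V, (∃ e ∈ G.incidenceFinset u, x e = 1) →
      ((HalfGraph G x).neighborSet u).ncard = 0) ∧
    (∀ u : V, ((HalfGraph G x).neighborSet u).ncard = 0 ∨
      ((HalfGraph G x).neighborSet u).ncard = 2) ∧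
    (∀ c : (HalfGraph G x).ConnectedComponent,
      (∃ u ∈ c.supp, ((HalfGraph G x).neighborSet u).ncard = 2) →
        Odd c.supp.ncard) := by
  have hhalf : ∀ e, x e = 0 ∨ x e = 1/2 ∨ x e = 1 := by
    intro e
    by_cases h0 : x e = 0
    · exact Or.inl h0
    by_cases h1 : x e = 1
    · exact Or.inr (Or.inr h1)
    exact Or.inr (Or.inl (frac_half G x hfeas hextreme e h0 h1))
  refine ⟨hhalf, ?_, ?_, ?_, ?_⟩
  · -- at most one 1-edge at each vertex
    intro u
    by_contra h
    push_neg at h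
    obtain ⟨e, he, f, hf, hef⟩ := Finset.one_lt_card.mp h
    obtain ⟨heinc, hxe⟩ := mem_filter.mp he
    obtain ⟨hfinc, hxf⟩ := mem_filter.mp hf
    have := pair_le G x hfeas u e f heinc hfinc hef
    rw [hxe, hxf] at this
    norm_num at this
  · -- a 1-edge kills all half-edges
    intro u h1
    rw [nbr_card]
    rcases vertex_struct G x hfeas hhalf u with ⟨_, h0⟩ | ⟨hno, _⟩
    · exact h0
    · exact absurd h1 hno
  · -- degree 0 or 2 in the half graph
    intro u
    rw [nbr_card]
    rcases vertex_struct G x hfeas hhalf u with ⟨_, h0⟩ | ⟨_, h2⟩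
    · exact Or.inl h0
    · exact Or.inr h2
  · -- odd components
    rintro c ⟨u, hu, hu2⟩
    have hne : ((HalfGraph G x).neighborSet u).Nonempty := by
      apply Set.nonempty_of_ncard_ne_zero
      rw [hu2]
      norm_num
    obtain ⟨a, ha⟩ := hne
    have ha' : (HalfGraph G x).Adj u a := ha
    have hH2 : ∀ z w : V, (HalfGraph G x).Adj z w →
        (univ.filter (fun y => (HalfGraph G x).Adj z y)).card = 2 := by
      intro z w hzw
      have hcoe : (HalfGraph G x).neighborSet z
          = ↑(univ.filter (fun y => (HalfGraph G x).Adj z y)) := by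
        ext y; simp [SimpleGraph.neighborSet]
      have h1 : ((HalfGraph G x).neighborSet z).ncard
          = (univ.filter (fun y => (HalfGraph G x).Adj z y)).card := by
        rw [hcoe, Set.ncard_coe_finset]
      rw [← h1, nbr_card]
      rcases vertex_struct G x hfeas hhalf z with ⟨_, h0⟩ | ⟨_, h2⟩
      · exfalso
        have hmem : s(z, w) ∈ (G.incidenceFinset z).filter (fun e => x e = 1/2) := by
          refine mem_filter.mpr ⟨?_, hzw.2⟩
          rw [SimpleGraph.mem_incidenceFinset]
          exact ⟨hzw.1, Sym2.mem_mk_left z w⟩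
        rw [Finset.card_eq_zero] at h0
        rw [h0] at hmem
        exact absurd hmem (Finset.notMem_empty _)
      · exact h2
    exact odd_comp G x hfeas hextreme (HalfGraph G x) (fun _ _ h => h) hH2 c u hu a ha'
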